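/- Let A be a finite alphabet with |A| ≥ 2 and n ≥ 1, and let Q ⊆ nA^* be a joinless code. Then Q is a finite maximal product code if and only if Q can be reached from {(ε,...,ε)} by a finite sequence of coordinatewise restrictions. -/

import Mathlib

/-- A prefix code: no element is a strict prefix of another. -/
def PrefixCode {A : Type*} (P : Set (List A)) : Prop :=
  ∀ p ∈ P, ∀ q ∈ P, p <+: q → p = q

/-- Two `n`-tuples of strings have a join iff they are coordinatewise prefix-comparable. -/
def HasJoin {A : Type*} {n : ℕ} (u v : Fin n → List A) : Prop :=
  ∀ i, u i <+: v i ∨ v i <+: u i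

/-- A joinless code in `nA^*`. -/
def JoinlessCode {A : Type*} {n : ℕ} (S : Set (Fin n → List A)) : Prop :=
  ∀ u ∈ S, ∀ v ∈ S, u ≠ v → ¬ HasJoin u v

/-- A maximal joinless code in `nA^*`. -/
def MaxJoinlessCode {A : Type*} {n : ℕ} (S : Set (Fin n → List A)) : Prop :=
  JoinlessCode S ∧ ∀ T : Set (Fin n → List A), JoinlessCode T → S ⊆ T → S = T

/-- A product code in `nA^*`: a cartesian product of `n` prefix codes. -/
def IsProductCode {A : Type*} {n : ℕ} (S : Set (Fin n → List A)) : Prop :=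
  ∃ P : Fin n → Set (List A), (∀ i, PrefixCode (P i)) ∧
    S = {u | ∀ i, u i ∈ P i}

/-- The coordinatewise restriction of `S` at the string `u` in coordinate `i`. -/
def CoordRestr {A : Type*} {n : ℕ} (S : Set (Fin n → List A)) (i : Fin n) (u : List A) :
    Set (Fin n → List A) :=
  {t ∈ S | t i ≠ u} ∪
    {q | ∃ t ∈ S, t i = u ∧ ∃ a : A, q = Function.update t i (u ++ [a])}

/-- One coordinatewise restriction step (at a string that occurs in coordinate `i`). -/
def CoordStep {A : Type*} {n : ℕ} (S T : Set (Fin n → List A)) : Prop :=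
  ∃ i : Fin n, ∃ u : List A, (∃ t ∈ S, t i = u) ∧ T = CoordRestr S i u

section Aux

open Relation

variable {A : Type*} {n : ℕ}

/-- The set of one-letter extensions of `u`. -/
def UAset (u : List A) : Set (List A) := {q | ∃ a : A, q = u ++ [a]}

/-- A full (maximal) prefix code. -/
def FullPC (P : Set (List A)) : Prop :=
  PrefixCode P ∧ ∀ s : List A, ∃ p ∈ P, p <+: s ∨ s <+: p

/-- Cartesian product of a family of codes. -/
def ProdSet (P : Fin n → Set (List A)) : Set (Fin n → List A) := {u | ∀ i, u i ∈ P i}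

lemma UAset_finite [Fintype A] (u : List A) : (UAset u).Finite := by
  have : UAset u = (fun a : A => u ++ [a]) '' Set.univ := by
    ext q; simp [UAset, eq_comm]
  rw [this]; exact Set.finite_univ.image _

lemma FullPC.nonempty {P : Set (List A)} (h : FullPC P) : P.Nonempty := by
  obtain ⟨p, hp, -⟩ := h.2 []
  exact ⟨p, hp⟩

lemma fullPC_singleton_nil : FullPC ({[]} : Set (List A)) := by
  constructor
  · rintro p rfl q rfl _; rfl
  · intro s; exact ⟨[], rfl, Or.inl (List.nil_prefix)⟩

lemma prod_joinless {P : Fin n → Set (List A)} (hP : ∀ i, PrefixCode (P i)) :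
    JoinlessCode (ProdSet P) := by
  intro u hu v hv huv hj
  apply huv
  funext i
  rcases hj i with h | h
  · exact hP i _ (hu i) _ (hv i) h
  · exact ((hP i) _ (hv i) _ (hu i) h).symm

lemma prod_max {P : Fin n → Set (List A)} (hP : ∀ i, FullPC (P i)) :
    MaxJoinlessCode (ProdSet P) := by
  refine ⟨prod_joinless (fun i => (hP i).1), ?_⟩
  intro T hT hsub
  refine Set.Subset.antisymm hsub ?_
  intro v hv
  choose p hp hcomp using fun i => (hP i).2 (v i)
  have hpS : p ∈ ProdSet P := hp
  by_cases hpe : p = v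
  · exact hpe ▸ hpS
  · exact absurd hcomp (hT p (hsub hpS) v hv hpe)

lemma prod_finite {P : Fin n → Set (List A)} (hP : ∀ i, (P i).Finite) :
    (ProdSet P).Finite := by
  have : ProdSet P = Set.pi Set.univ P := by
    ext u; simp [ProdSet, Set.mem_pi]
  rw [this]; exact Set.Finite.pi hP

lemma prodSet_nil : ProdSet (fun _ : Fin n => ({[]} : Set (List A))) =
    {fun _ => ([] : List A)} := by
  ext t
  constructor
  · intro h; exact funext (fun i => h i)
  · rintro rfl i; rfl

/-- Restriction of a product is a product. -/
lemma coordRestr_prod {P : Fin n → Set (List A)} {i : Fin n} {u : List A} (hu : u ∈ P i) :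
    CoordRestr (ProdSet P) i u =
      ProdSet (Function.update P i ((P i \ {u}) ∪ UAset u)) := by
  ext t
  constructor
  · rintro (⟨ht, hne⟩ | ⟨s, hs, hsi, a, rfl⟩)
    · intro j
      rcases eq_or_ne j i with rfl | hj
      · rw [Function.update_self]; exact Or.inl ⟨ht j, hne⟩
      · rw [Function.update_of_ne hj]; exact ht j
    · intro j
      rcases eq_or_ne j i with rfl | hj
      · rw [Function.update_self, Function.update_self]
        exact Or.inr ⟨a, rfl⟩
      · rw [Function.update_of_ne hj, Function.update_of_ne hj]; exact hs j
  · intro ht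
    have hti := ht i
    rw [Function.update_self] at hti
    rcases hti with ⟨htP, htne⟩ | ⟨a, ha⟩
    · left
      refine ⟨fun j => ?_, htne⟩
      rcases eq_or_ne j i with rfl | hj
      · exact htP
      · have := ht j; rwa [Function.update_of_ne hj] at this
    · right
      refine ⟨Function.update t i u, fun j => ?_, Function.update_self .., a, ?_⟩
      · rcases eq_or_ne j i with rfl | hj
        · rw [Function.update_self]; exact hu
        · rw [Function.update_of_ne hj]
          have := ht j; rwa [Function.update_of_ne hj] at this
      · rw [Function.update_idem, ← ha, Function.update_eq_self]

lemma step_prefix {P : Set (List A)} (hP : PrefixCode P) {u : List A} (hu : u ∈ P) :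
    PrefixCode ((P \ {u}) ∪ UAset u) := by
  rintro p (⟨hp, hpu⟩ | ⟨a, rfl⟩) q (⟨hq, hqu⟩ | ⟨b, rfl⟩) hpq
  · exact hP p hp q hq hpq
  · rcases le_or_gt p.length u.length with hl | hl
    · exact absurd (hP p hp u hu (List.prefix_of_prefix_length_le hpq (u.prefix_append [b]) hl))
        (by simpa using hpu)
    · refine hpq.eq_of_length (le_antisymm hpq.length_le ?_)
      simpa using hl
  · have : u = q := hP u hu q hq ((u.prefix_append [a]).trans hpq)
    exact absurd this.symm (by simpa using hqu)
  · exact hpq.eq_of_length (by simp)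

lemma step_full [Nonempty A] {P : Set (List A)} (hP : FullPC P) {u : List A} (hu : u ∈ P) :
    FullPC ((P \ {u}) ∪ UAset u) := by
  refine ⟨step_prefix hP.1 hu, ?_⟩
  intro s
  obtain ⟨p, hp, hcomp⟩ := hP.2 s
  by_cases hpu : p = u
  · subst hpu
    rcases hcomp with h | h
    · obtain ⟨r, rfl⟩ := h
      cases r with
      | nil =>
        obtain ⟨a⟩ := ‹Nonempty A›
        exact ⟨p ++ [a], Or.inr ⟨a, rfl⟩, Or.inr (by simpa using p.prefix_append [a])⟩
      | cons b r' =>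
        exact ⟨p ++ [b], Or.inr ⟨b, rfl⟩, Or.inl ⟨r', by simp⟩⟩
    · obtain ⟨a⟩ := ‹Nonempty A›
      exact ⟨p ++ [a], Or.inr ⟨a, rfl⟩, Or.inr (h.trans (p.prefix_append [a]))⟩
  · exact ⟨p, Or.inl ⟨hp, by simpa using hpu⟩, hcomp⟩

lemma unstep_prefix [Nonempty A] {P : Set (List A)} (hP : PrefixCode P) {u : List A}
    (huA : UAset u ⊆ P) (hune : u ∉ P)
    (hmax : ∀ p ∈ P, p.length ≤ u.length + 1) :
    PrefixCode ((P \ UAset u) ∪ {u}) := by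
  have hsing : ∀ x : List A, x ∈ ({u} : Set (List A)) → x = u := fun x hx => hx
  rintro p (⟨hp, hpA⟩ | hp) q (⟨hq, hqA⟩ | hq) hpq
  · exact hP p hp q hq hpq
  · -- p ∈ P, p <+: u : p is a prefix of an element u++[b] of P, so p = u++[b], too long
    exfalso
    rw [hsing q hq] at hpq
    obtain ⟨b⟩ := ‹Nonempty A›
    have hmem : u ++ [b] ∈ P := huA ⟨b, rfl⟩
    have heq := hP p hp (u ++ [b]) hmem (hpq.trans (u.prefix_append [b]))
    have hlen := hpq.length_le
    simp [heq] at hlen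
  · -- u <+: q, q ∈ P \ UAset u : forces q = u or q ∈ UAset u
    rw [hsing p hp] at hpq ⊢
    obtain ⟨r, rfl⟩ := hpq
    cases r with
    | nil => simp
    | cons b r' =>
      exfalso
      have hlen := hmax _ hq
      simp only [List.length_append, List.length_cons] at hlen
      have : r' = [] := List.eq_nil_of_length_eq_zero (by omega)
      subst this
      exact hqA ⟨b, rfl⟩
  · rw [hsing p hp, hsing q hq]

lemma unstep_full [Nonempty A] {P : Set (List A)} (hP : FullPC P) {u : List A}
    (huA : UAset u ⊆ P) (hune : u ∉ P)
    (hmax : ∀ p ∈ P, p.length ≤ u.length + 1) :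
    FullPC ((P \ UAset u) ∪ {u}) := by
  refine ⟨unstep_prefix hP.1 huA hune hmax, ?_⟩
  intro s
  obtain ⟨p, hp, hcomp⟩ := hP.2 s
  by_cases hpA : p ∈ UAset u
  · -- replace p by u
    obtain ⟨b, rfl⟩ := hpA
    refine ⟨u, Or.inr rfl, ?_⟩
    rcases hcomp with h | h
    · -- u ++ [b] <+: s
      exact Or.inl ((u.prefix_append [b]).trans h)
    · -- s <+: u ++ [b]
      rcases le_or_gt s.length u.length with hl | hl
      · exact Or.inr (List.prefix_of_prefix_length_le h (u.prefix_append [b]) hl)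
      · have heq : s = u ++ [b] := h.eq_of_length (le_antisymm h.length_le (by simpa using hl))
        exact Or.inl (heq ▸ u.prefix_append [b])
  · exact ⟨p, Or.inl ⟨hp, hpA⟩, hcomp⟩

/-- Any product of finite full prefix codes is reachable from the trivial code. -/
lemma reach_aux [Fintype A] [Nonempty A] (N : ℕ) :
    ∀ (P : Fin n → Set (List A)) (hf : ∀ i, (P i).Finite),
    (∀ i, FullPC (P i)) →
    (∑ i, ∑ p ∈ (hf i).toFinset, p.length) ≤ N →
    Relation.ReflTransGen CoordStep {fun _ => ([] : List A)} (ProdSet P) := by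
  classical
  induction N with
  | zero =>
    intro P hf hfull hm
    have hall : ∀ i, P i = {[]} := by
      intro i
      have h0 : ∑ p ∈ (hf i).toFinset, p.length = 0 := by
        have h1 : ∑ p ∈ (hf i).toFinset, p.length
            ≤ ∑ j, ∑ p ∈ (hf j).toFinset, p.length :=
          Finset.single_le_sum (f := fun j => ∑ p ∈ (hf j).toFinset, p.length)
            (fun j _ => Nat.zero_le _) (Finset.mem_univ i)
        omega
      have hz : ∀ p ∈ P i, p = [] := by
        intro p hp
        have : p.length = 0 := by
          have := Finset.sum_eq_zero_iff.mp h0 p ((hf i).mem_toFinset.mpr hp)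
          exact this
        simpa [List.length_eq_zero_iff] using this
      obtain ⟨p, hp⟩ := (hfull i).nonempty
      apply Set.eq_singleton_iff_unique_mem.mpr
      exact ⟨(hz p hp) ▸ hp, hz⟩
    have : P = fun _ => ({[]} : Set (List A)) := funext hall
    rw [this, prodSet_nil]
  | succ N ih =>
    intro P hf hfull hm
    by_cases hall : ∀ i, P i = {[]}
    · have : P = fun _ => ({[]} : Set (List A)) := funext hall
      rw [this, prodSet_nil]
    · push_neg at hall
      obtain ⟨i, hi⟩ := hall
      -- the empty string is not in P i
      have heps : [] ∉ P i := by
        intro h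
        apply hi
        apply Set.eq_singleton_iff_unique_mem.mpr
        exact ⟨h, fun p hp => ((hfull i).1 [] h p hp (List.nil_prefix)).symm⟩
      -- take a maximal-length element w of P i
      obtain ⟨w, hwF, hwmax⟩ := Finset.exists_max_image (hf i).toFinset List.length
        (((hf i).toFinset_nonempty).mpr (hfull i).nonempty)
      have hwP : w ∈ P i := (hf i).mem_toFinset.mp hwF
      have hwne : w ≠ [] := fun h => heps (h ▸ hwP)
      obtain ⟨u, a, rfl⟩ : ∃ u a, w = u ++ [a] := by
        rcases List.eq_nil_or_concat w with h | ⟨u, a, h⟩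
        · exact absurd h hwne
        · exact ⟨u, a, by simpa [List.concat_eq_append] using h⟩
      set w := u ++ [a] with hw
      have hmaxlen : ∀ p ∈ P i, p.length ≤ u.length + 1 := by
        intro p hp
        have := hwmax p ((hf i).mem_toFinset.mpr hp)
        rw [hw] at this
        simpa using this
      -- all one-letter extensions of u are in P i
      have huA : UAset u ⊆ P i := by
        rintro _ ⟨b, rfl⟩
        obtain ⟨p, hp, hcomp⟩ := (hfull i).2 (u ++ [b])
        rcases hcomp with h | h
        · rcases le_or_gt p.length u.length with hl | hl
          · exfalso
            have hpu : p <+: u := List.prefix_of_prefix_length_le h (u.prefix_append [b]) hl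
            have := (hfull i).1 p hp w hwP (hpu.trans (u.prefix_append [a]))
            rw [this] at hl
            simp [hw] at hl
          · have : p = u ++ [b] := h.eq_of_length (le_antisymm h.length_le (by simpa using hl))
            exact this ▸ hp
        · have : u ++ [b] = p := h.eq_of_length (le_antisymm h.length_le (by
            have := hmaxlen p hp; simpa using this))
          exact this ▸ hp
      have hune : u ∉ P i := by
        intro h
        have heq : u = w := (hfull i).1 u h w hwP (u.prefix_append [a])
        rw [hw] at heq
        simp at heq
      -- the previous product code
      set Pi0 : Set (List A) := (P i \ UAset u) ∪ {u} with hPi0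
      set P0 : Fin n → Set (List A) := Function.update P i Pi0 with hP0
      have hf0 : ∀ j, (P0 j).Finite := by
        intro j
        rcases eq_or_ne j i with rfl | hj
        · rw [hP0, Function.update_self]
          exact ((hf j).diff.union (Set.finite_singleton u))
        · rw [hP0, Function.update_of_ne hj]; exact hf j
      have hfull0 : ∀ j, FullPC (P0 j) := by
        intro j
        rcases eq_or_ne j i with rfl | hj
        · rw [hP0, Function.update_self]
          exact unstep_full (hfull j) huA hune hmaxlen
        · rw [hP0, Function.update_of_ne hj]; exact hfull j
      -- measure decreases strictly
      have hmeas : (∑ j, ∑ p ∈ (hf0 j).toFinset, p.length) ≤ N := by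
        have hcoord : ∀ j, j ≠ i →
            ∑ p ∈ (hf0 j).toFinset, p.length = ∑ p ∈ (hf j).toFinset, p.length := by
          intro j hj
          congr 1
          exact Set.Finite.toFinset_inj.mpr (by rw [hP0, Function.update_of_ne hj])
        have hFA : (Finset.univ.image (fun b : A => u ++ [b])) ⊆ (hf i).toFinset := by
          intro q hq
          simp only [Finset.mem_image, Finset.mem_univ, true_and] at hq
          obtain ⟨b, rfl⟩ := hq
          exact (hf i).mem_toFinset.mpr (huA ⟨b, rfl⟩)
        have hF0eq : (hf0 i).toFinset
            = insert u ((hf i).toFinset \ Finset.univ.image (fun b : A => u ++ [b])) := by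
          ext q
          simp only [Set.Finite.mem_toFinset, hP0, Function.update_self, hPi0,
            Set.mem_union, Set.mem_diff, Set.mem_singleton_iff, UAset,
            Set.mem_setOf_eq, Finset.mem_insert, Finset.mem_sdiff,
            Finset.mem_image, Finset.mem_univ, true_and]
          constructor
          · rintro (⟨hq, hqA⟩ | rfl)
            · exact Or.inr ⟨hq, fun ⟨b, hb⟩ => hqA ⟨b, hb.symm⟩⟩
            · exact Or.inl rfl
          · rintro (rfl | ⟨hq, hqA⟩)
            · exact Or.inr rfl
            · exact Or.inl ⟨hq, fun ⟨b, hb⟩ => hqA ⟨b, hb.symm⟩⟩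
        have huF : u ∉ (hf i).toFinset \ Finset.univ.image (fun b : A => u ++ [b]) := by
          simp only [Finset.mem_sdiff, Set.Finite.mem_toFinset]
          exact fun h => hune h.1
        have hwFA : w ∈ Finset.univ.image (fun b : A => u ++ [b]) := by
          simp only [Finset.mem_image, Finset.mem_univ, true_and]
          exact ⟨a, rfl⟩
        have hsum0 : ∑ p ∈ (hf0 i).toFinset, p.length
            = u.length + ∑ p ∈ ((hf i).toFinset \ Finset.univ.image (fun b : A => u ++ [b])),
              p.length := by
          rw [hF0eq, Finset.sum_insert huF]
        have hsumF : ∑ p ∈ ((hf i).toFinset \ Finset.univ.image (fun b : A => u ++ [b])),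
              p.length
            + ∑ p ∈ Finset.univ.image (fun b : A => u ++ [b]), p.length
            = ∑ p ∈ (hf i).toFinset, p.length := Finset.sum_sdiff hFA
        have hwlen : u.length + 1 ≤ ∑ p ∈ Finset.univ.image (fun b : A => u ++ [b]),
            p.length := by
          have := Finset.single_le_sum (f := List.length)
            (fun p _ => Nat.zero_le _) hwFA
          simpa [hw] using this
        have hlt : ∑ p ∈ (hf0 i).toFinset, p.length < ∑ p ∈ (hf i).toFinset, p.length := by
          omega
        have htot : (∑ j, ∑ p ∈ (hf0 j).toFinset, p.length)
            < ∑ j, ∑ p ∈ (hf j).toFinset, p.length := by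
          apply Finset.sum_lt_sum
          · intro j _
            rcases eq_or_ne j i with rfl | hj
            · exact le_of_lt hlt
            · exact le_of_eq (hcoord j hj)
          · exact ⟨i, Finset.mem_univ i, hlt⟩
        omega
      -- the restriction step
      refine Relation.ReflTransGen.tail (ih P0 hf0 hfull0 hmeas) ?_
      refine ⟨i, u, ?_, ?_⟩
      · -- a witness tuple in ProdSet P0 whose i-th coordinate is u
        choose c hc using fun j => (hfull0 j).nonempty
        refine ⟨Function.update c i u, fun j => ?_, Function.update_self ..⟩
        rcases eq_or_ne j i with rfl | hj
        · rw [Function.update_self, hP0, Function.update_self]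
          exact Or.inr rfl
        · rw [Function.update_of_ne hj]; exact hc j
      · -- CoordRestr (ProdSet P0) i u = ProdSet P
        have huP0 : u ∈ P0 i := by
          rw [hP0, Function.update_self]; exact Or.inr rfl
        have hfam : Function.update P0 i ((P0 i \ {u}) ∪ UAset u) = P := by
          funext j
          rcases eq_or_ne j i with rfl | hj
          · rw [Function.update_self, hP0, Function.update_self, hPi0]
            ext q
            simp only [Set.mem_union, Set.mem_diff, Set.mem_singleton_iff]
            constructor
            · rintro (⟨h1 | rfl, h2⟩ | hq)
              · exact h1.1
              · exact absurd rfl h2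
              · exact huA hq
            · intro hq
              by_cases hqA : q ∈ UAset u
              · exact Or.inr hqA
              · exact Or.inl ⟨Or.inl ⟨hq, hqA⟩, fun h => hune (h ▸ hq)⟩
          · rw [Function.update_of_ne hj, hP0, Function.update_of_ne hj]
        rw [coordRestr_prod huP0, hfam]

end Aux

/-- A joinless code `Q ⊆ nA^*` is a finite maximal product code iff it can be reached
from the tuple of empty strings by a finite sequence of coordinatewise restrictions. -/
theorem stmt_11 {A : Type*} [Fintype A] (hA : 2 ≤ Fintype.card A)
    {n : ℕ} (hn : 1 ≤ n) (Q : Set (Fin n → List A)) (hQ : JoinlessCode Q) :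
    (Q.Finite ∧ IsProductCode Q ∧ MaxJoinlessCode Q) ↔
      Relation.ReflTransGen CoordStep {fun _ => ([] : List A)} Q := by
  haveI : Nonempty A := Fintype.card_pos_iff.mp (by omega)
  constructor
  · rintro ⟨hfin, ⟨P, hPpc, rfl⟩, hmax⟩
    have hsing : JoinlessCode ({fun _ => ([] : List A)} : Set (Fin n → List A)) := by
      intro x hx y hy hxy
      rw [Set.mem_singleton_iff] at hx hy
      exact absurd (hx.trans hy.symm) hxy
    have hne : (ProdSet P).Nonempty := by
      by_contra h
      have hsub : ProdSet P ⊆ {fun _ => ([] : List A)} := fun x hx => absurd ⟨x, hx⟩ h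
      have heq := hmax.2 _ hsing hsub
      refine h ⟨fun _ => [], ?_⟩
      show (fun _ => ([] : List A)) ∈ {u : Fin n → List A | ∀ i, u i ∈ P i}
      rw [heq]
      exact Set.mem_singleton _
    obtain ⟨q, hq⟩ := hne
    have hfull : ∀ i, FullPC (P i) := by
      intro i
      refine ⟨hPpc i, ?_⟩
      intro s
      by_contra hno
      push_neg at hno
      have hvn : ∀ y ∈ ProdSet P, ¬ HasJoin (Function.update q i s) y := by
        intro y hy hj
        have hji := hj i
        rw [Function.update_self] at hji
        rcases hji with h | h
        · exact (hno (y i) (hy i)).2 h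
        · exact (hno (y i) (hy i)).1 h
      have hT : JoinlessCode (insert (Function.update q i s) (ProdSet P)) := by
        intro x hx y hy hxy hj
        rcases hx with rfl | hx
        · rcases hy with rfl | hy
          · exact hxy rfl
          · exact hvn y hy hj
        · rcases hy with rfl | hy
          · exact hvn x hx (fun j => (hj j).symm)
          · exact hmax.1 x hx y hy hxy hj
      have heq := hmax.2 _ hT (Set.subset_insert _ _)
      have hvQ : Function.update q i s ∈ {u : Fin n → List A | ∀ i, u i ∈ P i} := by
        rw [heq]; exact Set.mem_insert _ _
      have hs := hvQ i
      rw [Function.update_self] at hs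
      exact (hno s hs).1 (List.prefix_refl s)
    have hfi : ∀ i, (P i).Finite := by
      intro i
      have hsub : P i ⊆ (fun t => t i) '' ProdSet P := by
        intro p hp
        refine ⟨Function.update q i p, fun j => ?_, Function.update_self ..⟩
        rcases eq_or_ne j i with rfl | hj
        · rw [Function.update_self]; exact hp
        · rw [Function.update_of_ne hj]; exact hq j
      exact ((hfin.image _).subset hsub)
    exact reach_aux _ P hfi hfull le_rfl
  · intro h
    clear hQ
    suffices hgood : ∃ P : Fin n → Set (List A), (∀ i, (P i).Finite) ∧ (∀ i, FullPC (P i))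
        ∧ Q = ProdSet P by
      obtain ⟨P, hfi, hfull, rfl⟩ := hgood
      exact ⟨prod_finite hfi, ⟨P, fun i => (hfull i).1, rfl⟩, prod_max hfull⟩
    induction h with
    | refl =>
      exact ⟨fun _ => {[]}, fun _ => Set.finite_singleton _, fun _ => fullPC_singleton_nil,
        prodSet_nil.symm⟩
    | tail hst step ih =>
      obtain ⟨P, hfi, hfull, rfl⟩ := ih
      obtain ⟨i, u, ⟨t, ht, hti⟩, rfl⟩ := step
      have hu : u ∈ P i := hti ▸ ht i
      refine ⟨Function.update P i ((P i \ {u}) ∪ UAset u), fun j => ?_, fun j => ?_,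
        coordRestr_prod hu⟩
      · rcases eq_or_ne j i with rfl | hj
        · rw [Function.update_self]; exact (hfi j).diff.union (UAset_finite u)
        · rw [Function.update_of_ne hj]; exact hfi j
      · rcases eq_or_ne j i with rfl | hj
        · rw [Function.update_self]; exact step_full (hfull j) hu
        · rw [Function.update_of_ne hj]; exact hfull j
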